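/- Let Q₁, Q₂, Q₃, Q₄ : Ω → ℂ be four C¹ solutions of the complex Riccati equation ∂_z̄ Q + |Q|² = ν/4 (with the same real-valued ν), such that Q₁ − Q₂, Q₃ − Q₄, Q₁ − Q₄, and Q₃ − Q₂ vanish nowhere on Ω. Then the following Picard-type identity holds on Ω: [∂_z̄(Q₁−Q₂) + 2i·Im(conj(Q₁)·Q₂)]/(Q₁−Q₂) + [∂_z̄(Q₃−Q₄) + 2i·Im(conj(Q₃)·Q₄)]/(Q₃−Q₄) − [∂_z̄(Q₁−Q₄) + 2i·Im(conj(Q₁)·Q₄)]/(Q₁−Q₄) − [∂_z̄(Q₃−Q₂) + 2i·Im(conj(Q₃)·Q₂)]/(Q₃−Q₂) = 0. -/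

import Mathlib

open Complex Set

/-- Partial derivative in the x-direction. -/
noncomputable def pdx (F : ℂ → ℂ) (z : ℂ) : ℂ := fderiv ℝ F z 1
/-- Partial derivative in the y-direction. -/
noncomputable def pdy (F : ℂ → ℂ) (z : ℂ) : ℂ := fderiv ℝ F z Complex.I
/-- Wirtinger derivative ∂_z = (1/2)(∂_x − i∂_y). -/
noncomputable def dz (F : ℂ → ℂ) (z : ℂ) : ℂ := (pdx F z - Complex.I * pdy F z) / 2
/-- Wirtinger derivative ∂_z̄ = (1/2)(∂_x + i∂_y). -/
noncomputable def dzbar (F : ℂ → ℂ) (z : ℂ) : ℂ := (pdx F z + Complex.I * pdy F z) / 2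
/-- Laplacian Δ = ∂_xx + ∂_yy. -/
noncomputable def lap (F : ℂ → ℂ) (z : ℂ) : ℂ := pdx (pdx F) z + pdy (pdy F) z

lemma dzbar_sub {F G : ℂ → ℂ} {z : ℂ} (hF : DifferentiableAt ℝ F z)
    (hG : DifferentiableAt ℝ G z) :
    dzbar (fun w => F w - G w) z = dzbar F z - dzbar G z := by
  simp only [dzbar, pdx, pdy, fderiv_fun_sub hF hG, ContinuousLinearMap.sub_apply]
  ring

lemma key_alg (a b : ℂ) (h : a ≠ b) :
    ((‖b‖ ^ 2 : ℂ) - (‖a‖ ^ 2 : ℂ)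
        + 2 * Complex.I * ((((starRingEnd ℂ) a * b).im : ℂ))) / (a - b)
      = -((starRingEnd ℂ) a + (starRingEnd ℂ) b) := by
  have h1 : 2 * Complex.I * ((((starRingEnd ℂ) a * b).im : ℂ))
      = (starRingEnd ℂ) a * b - a * (starRingEnd ℂ) b := by
    have := Complex.sub_conj ((starRingEnd ℂ) a * b)
    simp only [map_mul, Complex.conj_conj] at this
    push_cast at this
    linear_combination -this
  have ha : (‖a‖ ^ 2 : ℂ) = (starRingEnd ℂ) a * a := by
    rw [Complex.conj_mul']
  have hb : (‖b‖ ^ 2 : ℂ) = (starRingEnd ℂ) b * b := by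
    rw [Complex.conj_mul']
  rw [h1, ha, hb, div_eq_iff (sub_ne_zero.mpr h)]
  ring

theorem picard_identity
    (Ω : Set ℂ) (hΩ : IsOpen Ω) (Q₁ Q₂ Q₃ Q₄ : ℂ → ℂ) (ν : ℂ → ℝ)
    (hQ₁ : ContDiffOn ℝ 1 Q₁ Ω) (hQ₂ : ContDiffOn ℝ 1 Q₂ Ω)
    (hQ₃ : ContDiffOn ℝ 1 Q₃ Ω) (hQ₄ : ContDiffOn ℝ 1 Q₄ Ω)
    (hR₁ : ∀ z ∈ Ω, dzbar Q₁ z + (‖Q₁ z‖ ^ 2 : ℂ) = (ν z : ℂ) / 4)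
    (hR₂ : ∀ z ∈ Ω, dzbar Q₂ z + (‖Q₂ z‖ ^ 2 : ℂ) = (ν z : ℂ) / 4)
    (hR₃ : ∀ z ∈ Ω, dzbar Q₃ z + (‖Q₃ z‖ ^ 2 : ℂ) = (ν z : ℂ) / 4)
    (hR₄ : ∀ z ∈ Ω, dzbar Q₄ z + (‖Q₄ z‖ ^ 2 : ℂ) = (ν z : ℂ) / 4)
    (h12 : ∀ z ∈ Ω, Q₁ z ≠ Q₂ z) (h34 : ∀ z ∈ Ω, Q₃ z ≠ Q₄ z)
    (h14 : ∀ z ∈ Ω, Q₁ z ≠ Q₄ z) (h32 : ∀ z ∈ Ω, Q₃ z ≠ Q₂ z) :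
    ∀ z ∈ Ω,
      (dzbar (fun w => Q₁ w - Q₂ w) z
          + 2 * Complex.I * ((((starRingEnd ℂ) (Q₁ z) * Q₂ z).im : ℂ)))
        / (Q₁ z - Q₂ z)
      + (dzbar (fun w => Q₃ w - Q₄ w) z
          + 2 * Complex.I * ((((starRingEnd ℂ) (Q₃ z) * Q₄ z).im : ℂ)))
        / (Q₃ z - Q₄ z)
      - (dzbar (fun w => Q₁ w - Q₄ w) z
          + 2 * Complex.I * ((((starRingEnd ℂ) (Q₁ z) * Q₄ z).im : ℂ)))
        / (Q₁ z - Q₄ z)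
      - (dzbar (fun w => Q₃ w - Q₂ w) z
          + 2 * Complex.I * ((((starRingEnd ℂ) (Q₃ z) * Q₂ z).im : ℂ)))
        / (Q₃ z - Q₂ z)
      = 0 := by
  intro z hz
  have hd : ∀ {Q : ℂ → ℂ}, ContDiffOn ℝ 1 Q Ω → DifferentiableAt ℝ Q z := by
    intro Q hQ
    exact (hQ.contDiffAt (hΩ.mem_nhds hz)).differentiableAt one_ne_zero
  have e1 := hd hQ₁; have e2 := hd hQ₂; have e3 := hd hQ₃; have e4 := hd hQ₄
  have r : ∀ (P R : ℂ → ℂ), DifferentiableAt ℝ P z → DifferentiableAt ℝ R z →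
      (∀ w ∈ Ω, dzbar P w + (‖P w‖ ^ 2 : ℂ) = (ν w : ℂ) / 4) →
      (∀ w ∈ Ω, dzbar R w + (‖R w‖ ^ 2 : ℂ) = (ν w : ℂ) / 4) →
      P z ≠ R z →
      (dzbar (fun w => P w - R w) z
          + 2 * Complex.I * ((((starRingEnd ℂ) (P z) * R z).im : ℂ)))
        / (P z - R z) = -((starRingEnd ℂ) (P z) + (starRingEnd ℂ) (R z)) := by
    intro P R hP hR hRP hRR hne
    have hsub : dzbar (fun w => P w - R w) z
        = (‖R z‖ ^ 2 : ℂ) - (‖P z‖ ^ 2 : ℂ) := by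
      rw [dzbar_sub hP hR]
      have h1 := hRP z hz; have h2 := hRR z hz
      linear_combination h1 - h2
    rw [hsub]
    exact key_alg (P z) (R z) hne
  rw [r Q₁ Q₂ e1 e2 hR₁ hR₂ (h12 z hz), r Q₃ Q₄ e3 e4 hR₃ hR₄ (h34 z hz),
      r Q₁ Q₄ e1 e4 hR₁ hR₄ (h14 z hz), r Q₃ Q₂ e3 e2 hR₃ hR₂ (h32 z hz)]
  ring
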